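/- Let G be a graph, F a minimum edge dominating set of G such that there exist two distinct edges e, e' ∈ F and an edge e'' adjacent (or equal) to both e and e' (i.e., e'' ∈ N[e] ∩ N[e']). Then γ'_t(G) ≤ 2·γ'(G) − 1. -/
import Mathlib


open SimpleGraph

variable {V : Type*}

/-- Two edges (as unordered pairs) are adjacent: distinct and sharing an endpoint. -/
def eAdj (e f : Sym2 V) : Prop := e ≠ f ∧ ∃ v, v ∈ e ∧ v ∈ f

/-- `F` is an edge dominating set of `G`. -/
def IsEDS (G : SimpleGraph V) (F : Set (Sym2 V)) : Prop :=
  F ⊆ G.edgeSet ∧ ∀ e ∈ G.edgeSet, e ∉ F → ∃ f ∈ F, eAdj e f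

/-- `F` is a total edge dominating set of `G`. -/
def IsTEDS (G : SimpleGraph V) (F : Set (Sym2 V)) : Prop :=
  F ⊆ G.edgeSet ∧ ∀ e ∈ G.edgeSet, ∃ f ∈ F, eAdj e f

/-- The edge domination number γ'(G). -/
noncomputable def edsNum (G : SimpleGraph V) : ℕ :=
  sInf {n | ∃ F : Set (Sym2 V), IsEDS G F ∧ F.ncard = n}

/-- The total edge domination number γ'_t(G). -/
noncomputable def tedsNum (G : SimpleGraph V) : ℕ :=
  sInf {n | ∃ F : Set (Sym2 V), IsTEDS G F ∧ F.ncard = n}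

/-- A leaf edge: an edge with an endpoint of degree 1. -/
def IsLeafEdge (G : SimpleGraph V) [∀ v : V, Fintype (G.neighborSet v)] (e : Sym2 V) : Prop :=
  e ∈ G.edgeSet ∧ ∃ v ∈ e, G.degree v = 1


theorem stmt19 {V : Type*} [Fintype V] (G : SimpleGraph V)
    (hTED : ∃ F : Set (Sym2 V), IsTEDS G F)
    (F : Set (Sym2 V)) (hF : IsEDS G F) (hFmin : F.ncard = edsNum G)
    (e e' : Sym2 V) (he : e ∈ F) (he' : e' ∈ F) (hne : e ≠ e')
    (e'' : Sym2 V) (he'' : e'' ∈ G.edgeSet)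
    (hadj : (e'' = e ∨ eAdj e e'') ∧ (e'' = e' ∨ eAdj e' e''))
    (hrest : ∀ f ∈ F, f ≠ e → f ≠ e' → ∃ g ∈ G.edgeSet, eAdj f g) :
    tedsNum G ≤ 2 * edsNum G - 1 := by
  classical
  have hsym : ∀ a b : Sym2 V, eAdj a b → eAdj b a := by
    rintro a b ⟨h1, v, hv1, hv2⟩; exact ⟨h1.symm, v, hv2, hv1⟩
  set gc : Sym2 V → Sym2 V := fun f =>
    if h : ∃ x ∈ G.edgeSet, eAdj f x then h.choose else f with hgc
  have hgc' : ∀ f ∈ F, f ≠ e → f ≠ e' → gc f ∈ G.edgeSet ∧ eAdj f (gc f) := by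
    intro f hf h1 h2
    have h := hrest f hf h1 h2
    simp only [hgc, dif_pos h]
    exact h.choose_spec
  set F' : Set (Sym2 V) := insert e'' (F ∪ (gc '' (F \ {e, e'}))) with hF'
  have hTF' : IsTEDS G F' := by
    constructor
    · rintro x (rfl | hx | ⟨f, hf, rfl⟩)
      · exact he''
      · exact hF.1 hx
      · obtain ⟨hf1, hf2⟩ := hf
        simp only [Set.mem_insert_iff, not_or] at hf2
        exact (hgc' f hf1 hf2.1 hf2.2).1
    · intro x hx
      by_cases hxF : x ∈ F
      · by_cases hxe : x = e
        · subst hxe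
          by_cases h1 : e'' = x
          · have h2 : eAdj e' e'' :=
              hadj.2.resolve_left (fun h => hne (h1.symm.trans h))
            rw [h1] at h2
            exact ⟨e', Or.inr (Or.inl he'), hsym _ _ h2⟩
          · have h2 : eAdj x e'' := hadj.1.resolve_left (fun h => h1 h)
            exact ⟨e'', Or.inl rfl, h2⟩
        · by_cases hxe' : x = e'
          · subst hxe'
            by_cases h1 : e'' = x
            · have h2 : eAdj e e'' :=
                hadj.1.resolve_left (fun h => hne (h.symm.trans h1))
              rw [h1] at h2
              exact ⟨e, Or.inr (Or.inl he), hsym _ _ h2⟩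
            · have h2 : eAdj x e'' := hadj.2.resolve_left (fun h => h1 h)
              exact ⟨e'', Or.inl rfl, h2⟩
          · obtain ⟨_, h2⟩ := hgc' x hxF hxe hxe'
            exact ⟨gc x, Or.inr (Or.inr ⟨x, ⟨hxF, by simp [hxe, hxe']⟩, rfl⟩), h2⟩
      · obtain ⟨f, hf, h2⟩ := hF.2 x hx hxF
        exact ⟨f, Or.inr (Or.inl hf), h2⟩
  have hfin : ∀ s : Set (Sym2 V), s.Finite := fun s => s.toFinite
  have hF2 : 2 ≤ F.ncard := by
    have : ({e, e'} : Set (Sym2 V)).ncard ≤ F.ncard :=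
      Set.ncard_le_ncard (by intro x hx; rcases hx with rfl | rfl; exacts [he, he'])
        (hfin F)
    rwa [Set.ncard_pair hne] at this
  have hcard : F'.ncard ≤ 2 * F.ncard - 1 := by
    have h1 : F'.ncard ≤ (F ∪ (gc '' (F \ {e, e'}))).ncard + 1 :=
      Set.ncard_insert_le _ _
    have h2 : (F ∪ (gc '' (F \ {e, e'}))).ncard ≤ F.ncard + (gc '' (F \ {e, e'})).ncard :=
      Set.ncard_union_le _ _
    have h3 : (gc '' (F \ {e, e'})).ncard ≤ (F \ {e, e'}).ncard :=
      Set.ncard_image_le (hfin _)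
    have hsub : ({e, e'} : Set (Sym2 V)) ⊆ F := by
      intro x hx; rcases hx with rfl | rfl; exacts [he, he']
    have h4 : (F \ ({e, e'} : Set (Sym2 V))).ncard = F.ncard - 2 := by
      rw [Set.ncard_diff hsub (hfin _), Set.ncard_pair hne]
    omega
  calc tedsNum G ≤ F'.ncard := Nat.sInf_le ⟨F', hTF', rfl⟩
    _ ≤ 2 * F.ncard - 1 := hcard
    _ = 2 * edsNum G - 1 := by rw [hFmin]
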